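/- Let C₀(Q) ⊆ A be a central non-degenerate inclusion and E : A → C₀(Q) a conditional expectation. Then for every a ∈ A the function q ↦ p^E_q(a) is lower semicontinuous on Q, i.e. for every s > 0 the set {q ∈ Q : p^E_q(a) > s} is open. -/

import Mathlib

open scoped ComplexOrder
open ZeroAtInfty

/-- The seminorm `p^E_q` from the GNS representation of the state `ev_q ∘ E`:
`p^E_q(a)² = sup { (ev_q∘E)(x* a* a x) / (ev_q∘E)(x* x) : (ev_q∘E)(x* x) > 0 }`
(with value `0` when the set is empty). -/
noncomputable def pE {Q : Type*} [TopologicalSpace Q]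
    {A : Type*} [NonUnitalCStarAlgebra A]
    (E : A →L[ℂ] C₀(Q, ℂ)) (q : Q) (a : A) : ℝ :=
  Real.sqrt (sSup {r : ℝ | ∃ x : A, 0 < (E (star x * x) q).re ∧
    r = (E (star x * (star a * a) * x) q).re / (E (star x * x) q).re})

/-- `p^unif_q(a) = inf {‖f a‖ : f ∈ C₀(Q), 0 ≤ f ≤ 1, f q = 1}`, the quotient seminorm of
`A / J^unif_q`. -/
noncomputable def punif {Q : Type*} [TopologicalSpace Q] [LocallyCompactSpace Q] [T2Space Q]
    {A : Type*} [NonUnitalCStarAlgebra A]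
    (ι : C₀(Q, ℂ) →⋆ₙₐ[ℂ] A) (q : Q) (a : A) : ℝ :=
  sInf {r : ℝ | ∃ f : C₀(Q, ℂ), (∀ x : Q, 0 ≤ f x ∧ f x ≤ 1) ∧ f q = 1 ∧ r = ‖ι f * a‖}

/-- For a central non-degenerate inclusion `C₀(Q) ⊆ A` and a conditional
expectation `E : A → C₀(Q)`, each function `q ↦ p^E_q(a)` is lower semicontinuous:
the sets `{q : p^E_q(a) > s}`, `s > 0`, are open. -/
theorem stmt10 {Q : Type*} [TopologicalSpace Q] [LocallyCompactSpace Q] [T2Space Q]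
    {A : Type*} [NonUnitalCStarAlgebra A] [PartialOrder A] [StarOrderedRing A]
    (ι : C₀(Q, ℂ) →⋆ₙₐ[ℂ] A) (hisom : Isometry ι)
    (hcentral : ∀ (f : C₀(Q, ℂ)) (a : A), ι f * a = a * ι f)
    (hnondeg : closure
      (Submodule.span ℂ {x : A | ∃ (f : C₀(Q, ℂ)) (a : A), x = ι f * a} : Set A) = Set.univ)
    (E : A →L[ℂ] C₀(Q, ℂ))
    (hEnorm : ‖E‖ = 1)
    (hEproj : ∀ f : C₀(Q, ℂ), E (ι f) = f)
    (hEmod : ∀ (f₁ f₂ : C₀(Q, ℂ)) (a : A), E (ι f₁ * a * ι f₂) = f₁ * E a * f₂)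
    (hEpos : ∀ a : A, 0 ≤ a → ∀ q : Q, 0 ≤ E a q) :
    ∀ a : A, ∀ s : ℝ, 0 < s → IsOpen {q : Q | s < pE E q a} := by
  intro a s hs
  set M : ℝ := ‖star a * a‖ with hM
  have hM0 : 0 ≤ M := norm_nonneg _
  -- key bound from positivity of E
  have key : ∀ (x : A) (q : Q),
      (E (star x * (star a * a) * x) q).re ≤ M * (E (star x * x) q).re := by
    intro x q
    have hle : star x * (star a * a) * x ≤ M • (star x * x) :=
      CStarAlgebra.star_left_conjugate_le_norm_smul (IsSelfAdjoint.star_mul_self a)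
    have hdiff : 0 ≤ M • (star x * x) - star x * (star a * a) * x := sub_nonneg.mpr hle
    have hpos := hEpos _ hdiff q
    have hre : 0 ≤ (E (M • (star x * x) - star x * (star a * a) * x) q).re :=
      (Complex.le_def.mp hpos).1
    rw [show (M • (star x * x) : A) = (M : ℂ) • (star x * x) from (Complex.coe_smul _ _).symm,
      map_sub, map_smul] at hre
    have : (((M : ℂ) • E (star x * x) - E (star x * (star a * a) * x)) q).re
        = M * (E (star x * x) q).re - (E (star x * (star a * a) * x) q).re := by
      simp [Complex.sub_re, Complex.mul_re]
    rw [this] at hre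
    linarith
  have hmain : {q : Q | s < pE E q a} =
      ⋃ x : A, {q : Q | 0 < (E (star x * x) q).re ∧
        s ^ 2 * (E (star x * x) q).re < (E (star x * (star a * a) * x) q).re} := by
    ext q
    simp only [Set.mem_setOf_eq, Set.mem_iUnion]
    set S : Set ℝ := {r : ℝ | ∃ x : A, 0 < (E (star x * x) q).re ∧
      r = (E (star x * (star a * a) * x) q).re / (E (star x * x) q).re} with hS
    have hbdd : BddAbove S := by
      refine ⟨M, fun r hr => ?_⟩
      obtain ⟨x, hx, rfl⟩ := hr
      exact (div_le_iff₀ hx).mpr (by simpa [mul_comm] using key x q)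
    rw [pE, Real.lt_sqrt hs.le, ← hS]
    constructor
    · intro h
      have hne : S.Nonempty := by
        by_contra hne
        rw [Set.not_nonempty_iff_eq_empty] at hne
        rw [hne, Real.sSup_empty] at h
        nlinarith
      obtain ⟨r, hr, hlt⟩ := (lt_csSup_iff hbdd hne).mp h
      obtain ⟨x, hx, rfl⟩ := hr
      exact ⟨x, hx, (lt_div_iff₀ hx).mp hlt⟩
    · rintro ⟨x, hx, hlt⟩
      have hmem : (E (star x * (star a * a) * x) q).re / (E (star x * x) q).re ∈ S :=
        ⟨x, hx, rfl⟩
      calc s ^ 2 < (E (star x * (star a * a) * x) q).re / (E (star x * x) q).re :=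
            (lt_div_iff₀ hx).mpr hlt
        _ ≤ sSup S := le_csSup hbdd hmem
  rw [hmain]
  refine isOpen_iUnion fun x => ?_
  have hg : Continuous fun q : Q => (E (star x * x) q).re :=
    Complex.continuous_re.comp (map_continuous (E (star x * x)))
  have hh : Continuous fun q : Q => (E (star x * (star a * a) * x) q).re :=
    Complex.continuous_re.comp (map_continuous (E (star x * (star a * a) * x)))
  exact (isOpen_lt continuous_const hg).inter
    (isOpen_lt ((continuous_const.mul hg)) hh)
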